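/- arXiv:2001.09364 — 4 statements merged into one kernel-verified Lean document; each statement's English description precedes it below -/
import Mathlib

section
/- Let S be a nonempty finite subset of ℝⁿ whose centroid is 0 and whose affine span is all of ℝⁿ, and let P = convexHull ℝ S. If F is an exposed face of P with F ≠ P, then 0 ∉ F. (No proper face of a full-dimensional polytope contains its centroid.) -/
/-- No proper exposed face of a full-dimensional polytope contains its
centroid: if `S ⊆ ℝⁿ` is finite, nonempty, has centroid `0` and affinely spans `ℝⁿ`, and
`F` is a nonempty exposed face of `P = conv S` with `F ≠ P`, then `0 ∉ F`. -/
theorem centroid_not_mem_proper_face (n : ℕ) (S : Finset (EuclideanSpace ℝ (Fin n)))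
    (hS : S.Nonempty)
    (hcent : (S.card : ℝ)⁻¹ • ∑ x ∈ S, x = 0)
    (hspan : affineSpan ℝ (S : Set (EuclideanSpace ℝ (Fin n))) = ⊤)
    (P F : Set (EuclideanSpace ℝ (Fin n)))
    (hP : P = convexHull ℝ (S : Set (EuclideanSpace ℝ (Fin n))))
    (hF : IsExposed ℝ P F) (hFne : F.Nonempty) (hFP : F ≠ P) :
    (0 : EuclideanSpace ℝ (Fin n)) ∉ F := by
  intro h0F
  obtain ⟨l, hl⟩ := hF hFne
  have h0 : (0 : EuclideanSpace ℝ (Fin n)) ∈ {x ∈ P | ∀ y ∈ P, l y ≤ l x} := hl ▸ h0F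
  have hmax : ∀ y ∈ P, l y ≤ 0 := by
    intro y hy
    have := h0.2 y hy
    simpa using this
  have hc : (S.card : ℝ) ≠ 0 := Nat.cast_ne_zero.2 (Finset.card_ne_zero.2 hS)
  have hsum : ∑ x ∈ S, x = 0 := by
    rcases smul_eq_zero.mp hcent with h | h
    · exact absurd h (inv_ne_zero hc)
    · exact h
  have hSP : ∀ s ∈ S, (s : EuclideanSpace ℝ (Fin n)) ∈ P := fun s hs =>
    hP ▸ subset_convexHull ℝ _ hs
  have hls : ∀ s ∈ S, l s = 0 := by
    have hsum' : ∑ s ∈ S, l s = 0 := by rw [← map_sum, hsum, map_zero]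
    intro s hs
    exact (Finset.sum_eq_zero_iff_of_nonpos
      (fun i hi => hmax i (hSP i hi))).mp hsum' s hs
  have hlzero : ∀ x, l x = 0 := by
    intro x
    have hle : affineSpan ℝ (S : Set (EuclideanSpace ℝ (Fin n))) ≤
        (LinearMap.ker (l : EuclideanSpace ℝ (Fin n) →ₗ[ℝ] ℝ)).toAffineSubspace := by
      rw [affineSpan_le]
      intro s hs
      exact hls s hs
    have hx : x ∈ affineSpan ℝ (S : Set (EuclideanSpace ℝ (Fin n))) := by
      rw [hspan]; trivial
    exact hle hx
  apply hFP
  rw [hl]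
  ext x
  simp only [Set.mem_setOf_eq]
  exact ⟨fun h => h.1, fun hx => ⟨hx, fun y _ => by rw [hlzero y, hlzero x]⟩⟩
end

section
/- Let C ⊆ ℝⁿ be a set and let F be a nonempty exposed face of C (IsExposed ℝ C F). Then F = C ∩ (affineSpan ℝ F : Set ℝⁿ). That is, an exposed face of a convex body is recovered as the intersection of the body with the affine span of the face. -/
/-- A nonempty exposed face `F` of a set `C ⊆ ℝⁿ` is recovered as the
intersection of `C` with the affine span of `F`. -/
theorem exposed_face_eq_inter_affineSpan (n : ℕ)
    (C F : Set (EuclideanSpace ℝ (Fin n)))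
    (hF : IsExposed ℝ C F) (hFne : F.Nonempty) :
    F = C ∩ (affineSpan ℝ F : Set (EuclideanSpace ℝ (Fin n))) := by
  obtain ⟨l, hl⟩ := hF hFne
  obtain ⟨z, hz⟩ := hFne
  set m : ℝ := l z with hm
  have hzC : z ∈ C := by rw [hl] at hz; exact hz.1
  have hzmax : ∀ y ∈ C, l y ≤ m := by
    rw [hl] at hz; exact hz.2
  have hconst : ∀ x ∈ F, l x = m := by
    intro x hx
    rw [hl] at hx
    exact le_antisymm (hzmax x hx.1) (hx.2 z hzC)
  -- l = m on the affine span of F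
  have hspan : ∀ x ∈ affineSpan ℝ F, l x = m := by
    intro x hx
    have hsub : affineSpan ℝ F ≤
        AffineSubspace.comap (l.toLinearMap.toAffineMap) (AffineSubspace.mk' m ⊥) := by
      apply affineSpan_le.2
      intro y hy
      show l y ∈ AffineSubspace.mk' m (⊥ : Submodule ℝ ℝ)
      rw [AffineSubspace.mem_mk']
      simp [hconst y hy]
    have h2 : l x -ᵥ m ∈ (⊥ : Submodule ℝ ℝ) :=
      AffineSubspace.mem_mk'.1 (hsub hx)
    simpa [sub_eq_zero] using h2
  ext x
  constructor
  · intro hx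
    rw [hl] at hx
    exact ⟨hx.1, subset_affineSpan ℝ F (by rw [hl]; exact hx)⟩
  · rintro ⟨hxC, hxS⟩
    rw [hl]
    refine ⟨hxC, fun y hy => ?_⟩
    rw [hspan x hxS]
    exact hzmax y hy
end

section
/- Let C ⊆ ℝⁿ be a set and let F and F' be nonempty exposed faces of C (IsExposed ℝ C F and IsExposed ℝ C F'). If affineSpan ℝ F = affineSpan ℝ F', then F = F'. In particular, an affine subspace cannot contain two distinct exposed faces that both span it. -/
lemma exposed_subset_of_subset_affineSpan {E : Type*} [NormedAddCommGroup E]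
    [NormedSpace ℝ E] {C F F' : Set E} (hF : IsExposed ℝ C F) (hFne : F.Nonempty)
    (hF'C : F' ⊆ C) (hsub : F' ⊆ (affineSpan ℝ F : Set E)) : F' ⊆ F := by
  obtain ⟨l, hl⟩ := hF hFne
  obtain ⟨x0, hx0⟩ := hFne
  have hx0' := hx0
  rw [hl] at hx0'
  obtain ⟨hx0C, hx0max⟩ := hx0'
  set S : AffineSubspace ℝ E :=
    AffineSubspace.comap l.toLinearMap.toAffineMap
      (AffineSubspace.mk' (l x0) (⊥ : Submodule ℝ ℝ)) with hS
  have hFS : F ⊆ (S : Set E) := by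
    intro x hx
    have hx' := hx; rw [hl] at hx'
    obtain ⟨hxC, hxmax⟩ := hx'
    have hlx : l x = l x0 := le_antisymm (hx0max x hxC) (hxmax x0 hx0C)
    show l.toLinearMap.toAffineMap x ∈ AffineSubspace.mk' (l x0) (⊥ : Submodule ℝ ℝ)
    rw [AffineSubspace.mem_mk']
    simp [hlx]
  have hspanS : affineSpan ℝ F ≤ S := affineSpan_le.2 hFS
  intro z hz
  have hzS : z ∈ S := hspanS (hsub hz)
  have hzval : l z = l x0 := by
    rw [hS, AffineSubspace.mem_comap, AffineSubspace.mem_mk'] at hzS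
    simpa [sub_eq_zero] using hzS
  rw [hl]
  exact ⟨hF'C hz, fun y hy => hzval ▸ hx0max y hy⟩

/-- Two nonempty exposed faces of a set `C ⊆ ℝⁿ` with the same affine
span are equal. -/
theorem exposed_faces_eq_of_affineSpan_eq (n : ℕ)
    (C F F' : Set (EuclideanSpace ℝ (Fin n)))
    (hF : IsExposed ℝ C F) (hFne : F.Nonempty)
    (hF' : IsExposed ℝ C F') (hF'ne : F'.Nonempty)
    (hspan : affineSpan ℝ F = affineSpan ℝ F') :
    F = F' := by
  apply Set.Subset.antisymm
  · exact exposed_subset_of_subset_affineSpan hF' hF'ne hF.subset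
      (hspan ▸ fun x hx => subset_affineSpan ℝ F hx)
  · exact exposed_subset_of_subset_affineSpan hF hFne hF'.subset
      (hspan ▸ fun x hx => subset_affineSpan ℝ F' hx)
end

section
/- Let D be a simple graph on a finite vertex type V and let f₀ : V → Fin 3 be a decoration that never takes the value 2. If f is obtained from f₀ by any finite number of applications of the rule (★), then no two adjacent vertices u, v of D satisfy f u = 2 and f v = 0. (In any decoration reachable by the rule (★), vertices decorated 2 are never adjacent to vertices decorated 0.) -/
/-- The transformation rule `(★)` of Champagne–Kjiri–Patera–Sharp on `{0,1,2}`-decorated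
Coxeter diagrams: given a decoration `f` and a vertex `w` (with `f w = 1`), the new
decoration sends `v` to `2` if `f v = 2` or `v = w`; to `1` if (`f v = 1` and `v ≠ w`) or
(`f v = 0` and `v` is adjacent to `w`); and to `0` otherwise. -/
def starRule {V : Type*} [DecidableEq V] (D : SimpleGraph V) [DecidableRel D.Adj]
    (f : V → Fin 3) (w : V) : V → Fin 3 := fun v =>
  if f v = 2 ∨ v = w then 2
  else if (f v = 1 ∧ v ≠ w) ∨ (f v = 0 ∧ D.Adj v w) then 1
  else 0

/-- `f` is obtained from `f₀` by `k` successive applications of the rule `(★)`, each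
applied at a vertex decorated `1` at the time of application. -/
def ReachedIn {V : Type*} [DecidableEq V] (D : SimpleGraph V) [DecidableRel D.Adj]
    (f₀ : V → Fin 3) (k : ℕ) (f : V → Fin 3) : Prop :=
  ∃ g : ℕ → (V → Fin 3), g 0 = f₀ ∧ g k = f ∧
    ∀ i < k, ∃ w : V, g i w = 1 ∧ g (i + 1) = starRule D (g i) w

/-- In any decoration reachable from a `2`-free decoration by the rule
`(★)`, a vertex decorated `2` is never adjacent to a vertex decorated `0`. -/
theorem no_adjacent_two_zero {V : Type*} [Fintype V] [DecidableEq V]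
    (D : SimpleGraph V) [DecidableRel D.Adj]
    (f₀ : V → Fin 3) (h₀ : ∀ v, f₀ v ≠ 2)
    (k : ℕ) (f : V → Fin 3) (hf : ReachedIn D f₀ k f) :
    ∀ u v : V, D.Adj u v → ¬(f u = 2 ∧ f v = 0) := by
  obtain ⟨g, hg0, hgk, hstep⟩ := hf
  suffices h : ∀ i ≤ k, ∀ u v : V, D.Adj u v → ¬(g i u = 2 ∧ g i v = 0) by
    intro u v huv
    rw [← hgk]; exact h k le_rfl u v huv
  intro i
  induction i with
  | zero =>
    intro _ u v _ hc
    exact h₀ u (hg0 ▸ hc.1)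
  | succ n ih =>
    intro hn u v huv hc
    obtain ⟨h2, h0⟩ := hc
    obtain ⟨w, hw1, hw⟩ := hstep n (by omega)
    have ihn := ih (by omega)
    rw [hw] at h2 h0
    unfold starRule at h2 h0
    by_cases hcv : g n v = 2 ∨ v = w
    · simp [hcv] at h0
    · simp only [hcv, if_false] at h0
      by_cases hcv1 : (g n v = 1 ∧ v ≠ w) ∨ (g n v = 0 ∧ D.Adj v w)
      · simp [hcv1] at h0
      · push_neg at hcv hcv1
        have hv0 : g n v = 0 := by
          have h1 : g n v ≠ 1 := fun h => hcv.2 (hcv1.1 h)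
          have h2 := hcv.1
          fin_omega
        have hnadj : ¬ D.Adj v w := fun h => (hcv1.2 hv0) h
        by_cases hcu : g n u = 2 ∨ u = w
        · rcases hcu with hu2 | rfl
          · exact ihn u v huv ⟨hu2, hv0⟩
          · exact hnadj huv.symm
        · simp only [hcu, if_false] at h2
          split at h2 <;> exact absurd h2 (by decide)
end
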